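/- Let G be a graph with m ≥ 1 edges, N vertices, and no isolated vertices. Let Γ be a graph on n vertices whose maximum degree is at most d, and suppose the complement of Γ contains a clique of size k ≥ 1. If n ≥ N + d·⌊2m/(k+1)⌋, then the complement of Γ contains a copy of G. -/

import Mathlib

open SimpleGraph

/-- `G.ContainsCopy H` means the graph `G` contains a subgraph isomorphic to `H`,
i.e. there is an injective graph homomorphism from `H` into `G`. -/
def SimpleGraph.ContainsCopy {α β : Type*} (G : SimpleGraph α) (H : SimpleGraph β) : Prop :=
  ∃ f : H →g G, Function.Injective f

/-- `RamseyProp n H G` : every graph `Γ` on `n` vertices contains a copy of `H`,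
or its complement contains a copy of `G`. -/
def RamseyProp {α β : Type*} (n : ℕ) (H : SimpleGraph α) (G : SimpleGraph β) : Prop :=
  ∀ Γ : SimpleGraph (Fin n), Γ.ContainsCopy H ∨ Γᶜ.ContainsCopy G

/-- The Ramsey number `r(H, G)` : the least positive `n` such that every graph on `n`
vertices contains a copy of `H` or its complement contains a copy of `G`. -/
noncomputable def ramseyNumber {α β : Type*} (H : SimpleGraph α) (G : SimpleGraph β) : ℕ :=
  sInf {n : ℕ | 0 < n ∧ RamseyProp n H G}

theorem stmt_10 {β : Type} [Fintype β] (G : SimpleGraph β) (m N n d k : ℕ)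
    (hm : G.edgeSet.ncard = m) (hm1 : 1 ≤ m) (hN : Fintype.card β = N)
    (hiso : ∀ v, ∃ w, G.Adj v w)
    (Γ : SimpleGraph (Fin n)) [DecidableRel Γ.Adj]
    (hd : ∀ v, Γ.degree v ≤ d)
    (hk : 1 ≤ k) (hclique : ∃ S : Finset (Fin n), Γᶜ.IsNClique k S)
    (hn : N + d * (2 * m / (k + 1)) ≤ n) :
    Γᶜ.ContainsCopy G := by
  classical
  obtain ⟨S, hS⟩ := hclique
  -- β is nonempty
  have hβ : Nonempty β := by
    by_contra h
    have hempty : IsEmpty β := not_nonempty_iff.mp h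
    have : G.edgeSet = ∅ := by
      ext a
      refine ⟨fun _ => ?_, fun ha => absurd ha (Set.notMem_empty a)⟩
      induction a using Sym2.ind with
      | _ x y => exact hempty.elim x
    rw [this, Set.ncard_empty] at hm
    omega
  have hN1 : 1 ≤ N := by rw [← hN]; exact Fintype.card_pos
  have hn0 : 0 < n := by omega
  -- degree sum formula
  have hsum : ∑ v, G.degree v = 2 * m := by
    rw [SimpleGraph.sum_degrees_eq_twice_card_edges]
    congr 1
    rw [← hm, ← Set.ncard_coe_finset G.edgeFinset, SimpleGraph.coe_edgeFinset]
  -- order vertices by decreasing degree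
  obtain ⟨e, he⟩ : ∃ e : Fin N ≃ β, ∀ i j : Fin N, i ≤ j → G.degree (e j) ≤ G.degree (e i) := by
    have g : Fin N ≃ β := (Fintype.equivFinOfCardEq hN).symm
    refine ⟨(Fin.revPerm.trans (Tuple.sort (fun i => G.degree (g i)))).trans g, fun i j hij => ?_⟩
    exact Tuple.monotone_sort (fun i => G.degree (g i)) (Fin.rev_le_rev.mpr hij)
  -- the main greedy construction
  have key : ∀ t, t ≤ N → ∃ f : Fin N → Fin n,
      (∀ i j : Fin N, i.val < t → j.val < t → f i = f j → i = j) ∧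
      (∀ i j : Fin N, i.val < t → j.val < t → G.Adj (e i) (e j) → Γᶜ.Adj (f i) (f j)) ∧
      (∀ i : Fin N, i.val < t → i.val < k → f i ∈ S) := by
    intro t
    induction t with
    | zero =>
      exact fun _ => ⟨fun _ => ⟨0, hn0⟩,
        fun i j hi => absurd hi (Nat.not_lt_zero _),
        fun i j hi => absurd hi (Nat.not_lt_zero _),
        fun i hi => absurd hi (Nat.not_lt_zero _)⟩
    | succ t ih =>
      intro ht
      obtain ⟨f, hinj, hadj, hmem⟩ := ih (by omega)
      have htN : t < N := ht
      set it : Fin N := ⟨t, htN⟩ with hit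
      have himcard : ((Finset.univ.filter (fun i : Fin N => i.val < t)).image f).card ≤ t := by
        refine le_trans Finset.card_image_le ?_
        have h := Finset.card_le_card_of_injOn
          (s := Finset.univ.filter (fun i : Fin N => i.val < t))
          (t := Finset.range t) (fun i : Fin N => i.val)
          (fun x hx => by simpa using (Finset.mem_filter.mp hx).2)
          (fun a _ b _ hab => Fin.val_injective hab)
        simpa using h
      by_cases htk : t < k
      · -- embed into the clique
        obtain ⟨c, hcS, hcim⟩ : ∃ c ∈ S,
            c ∉ (Finset.univ.filter (fun i : Fin N => i.val < t)).image f := by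
          have hne : (S \ (Finset.univ.filter (fun i : Fin N => i.val < t)).image f).Nonempty := by
            rw [← Finset.card_pos]
            have := Finset.le_card_sdiff ((Finset.univ.filter (fun i : Fin N => i.val < t)).image f) S
            rw [hS.2] at this
            omega
          obtain ⟨c, hc⟩ := hne
          rw [Finset.mem_sdiff] at hc
          exact ⟨c, hc.1, hc.2⟩
        have hcnot : ∀ i : Fin N, i.val < t → f i ≠ c := by
          intro i hi hfi
          exact hcim (Finset.mem_image.mpr ⟨i, by simp [hi], hfi⟩)
        refine ⟨Function.update f it c, ?_, ?_, ?_⟩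
        · intro i j hi hj hij
          rcases Nat.lt_or_ge i.val t with hi' | hi' <;> rcases Nat.lt_or_ge j.val t with hj' | hj'
          · rw [Function.update_of_ne (by simp [hit, Fin.ext_iff]; omega),
              Function.update_of_ne (by simp [hit, Fin.ext_iff]; omega)] at hij
            exact hinj i j hi' hj' hij
          · have hj'' : j = it := by simp [hit, Fin.ext_iff]; omega
            rw [hj'', Function.update_self,
              Function.update_of_ne (by simp [hit, Fin.ext_iff]; omega)] at hij
            exact absurd hij (hcnot i hi')
          · have hi'' : i = it := by simp [hit, Fin.ext_iff]; omega
            rw [hi'', Function.update_self,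
              Function.update_of_ne (by simp [hit, Fin.ext_iff]; omega)] at hij
            exact absurd hij.symm (hcnot j hj')
          · have h1 : i = it := by simp [hit, Fin.ext_iff]; omega
            have h2 : j = it := by simp [hit, Fin.ext_iff]; omega
            rw [h1, h2]
        · intro i j hi hj hGij
          rcases Nat.lt_or_ge i.val t with hi' | hi' <;> rcases Nat.lt_or_ge j.val t with hj' | hj'
          · rw [Function.update_of_ne (by simp [hit, Fin.ext_iff]; omega),
              Function.update_of_ne (by simp [hit, Fin.ext_iff]; omega)]
            exact hadj i j hi' hj' hGij
          · have hj'' : j = it := by simp [hit, Fin.ext_iff]; omega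
            rw [hj'', Function.update_self,
              Function.update_of_ne (by simp [hit, Fin.ext_iff]; omega)]
            exact hS.1 (hmem i hi' (by omega)) hcS (hcnot i hi')
          · have hi'' : i = it := by simp [hit, Fin.ext_iff]; omega
            rw [hi'', Function.update_self,
              Function.update_of_ne (by simp [hit, Fin.ext_iff]; omega)]
            exact (hS.1 (hmem j hj' (by omega)) hcS (hcnot j hj')).symm
          · have hi'' : i = it := by simp [hit, Fin.ext_iff]; omega
            have hj'' : j = it := by simp [hit, Fin.ext_iff]; omega
            rw [hi'', hj''] at hGij
            exact absurd hGij (G.irrefl)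
        · intro i hi hik
          rcases Nat.lt_or_ge i.val t with hi' | hi'
          · rw [Function.update_of_ne (by simp [hit, Fin.ext_iff]; omega)]
            exact hmem i hi' hik
          · have : i = it := by simp [hit, Fin.ext_iff]; omega
            rw [this, Function.update_self]
            exact hcS
      · -- greedy step
        have hkt : k ≤ t := by omega
        have hdeg : G.degree (e it) ≤ 2 * m / (k + 1) := by
          rw [Nat.le_div_iff_mul_le (by omega)]
          have hk1N : k + 1 ≤ N := by omega
          calc G.degree (e it) * (k + 1)
              = ∑ _j : Fin (k+1), G.degree (e it) := by
                simp [Finset.sum_const, mul_comm]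
            _ ≤ ∑ j : Fin (k+1), G.degree (e (Fin.castLE hk1N j)) := by
                refine Finset.sum_le_sum fun j _ => ?_
                refine he (Fin.castLE hk1N j) it ?_
                simp [Fin.le_def, hit]
                omega
            _ = ∑ i ∈ Finset.univ.image (Fin.castLE hk1N), G.degree (e i) := by
                rw [Finset.sum_image (fun a _ b _ h => Fin.castLE_injective hk1N h)]
            _ ≤ ∑ i : Fin N, G.degree (e i) :=
                Finset.sum_le_sum_of_subset (Finset.subset_univ _)
            _ = ∑ v, G.degree v := Fintype.sum_equiv e _ _ (fun i => rfl)
            _ = 2 * m := hsum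
        set A : Finset (Fin N) :=
          Finset.univ.filter (fun i => i.val < t ∧ G.Adj (e i) (e it)) with hA
        have hAcard : A.card ≤ G.degree (e it) := by
          rw [← SimpleGraph.card_neighborFinset_eq_degree]
          refine Finset.card_le_card_of_injOn (fun i => e i) ?_
            (fun a _ b _ h => e.injective h)
          intro i hi
          rw [hA, Finset.mem_coe, Finset.mem_filter] at hi
          rw [Finset.mem_coe, SimpleGraph.mem_neighborFinset]
          exact hi.2.2.symm
        set Forb : Finset (Fin n) :=
          ((Finset.univ.filter (fun i : Fin N => i.val < t)).image f) ∪
            A.biUnion (fun i => Γ.neighborFinset (f i)) with hForb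
        have hFcard : Forb.card < n := by
          have h1 : (A.biUnion (fun i => Γ.neighborFinset (f i))).card ≤ A.card * d := by
            refine le_trans Finset.card_biUnion_le ?_
            calc ∑ i ∈ A, (Γ.neighborFinset (f i)).card
                ≤ ∑ _i ∈ A, d := by
                  refine Finset.sum_le_sum fun i _ => ?_
                  rw [SimpleGraph.card_neighborFinset_eq_degree]
                  exact hd (f i)
              _ = A.card * d := by rw [Finset.sum_const, smul_eq_mul]
          have h2 : Forb.card ≤ t + A.card * d :=
            le_trans (Finset.card_union_le _ _) (by omega)
          have h3 : A.card * d ≤ (2 * m / (k + 1)) * d :=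
            Nat.mul_le_mul_right d (le_trans hAcard hdeg)
          have h4 : (2 * m / (k + 1)) * d = d * (2 * m / (k + 1)) := mul_comm _ _
          omega
        obtain ⟨c, hc⟩ : ∃ c : Fin n, c ∉ Forb := by
          by_contra h
          push_neg at h
          have hsub : (Finset.univ : Finset (Fin n)) ⊆ Forb := fun x _ => h x
          have := Finset.card_le_card hsub
          simp at this
          omega
        have hcnot : ∀ i : Fin N, i.val < t → f i ≠ c := by
          intro i hi hfi
          exact hc (Finset.mem_union_left _
            (Finset.mem_image.mpr ⟨i, by simp [hi], hfi⟩))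
        have hcadj : ∀ i : Fin N, i.val < t → G.Adj (e i) (e it) → ¬ Γ.Adj (f i) c := by
          intro i hi hGi hΓ
          refine hc (Finset.mem_union_right _ (Finset.mem_biUnion.mpr ⟨i, ?_, ?_⟩))
          · rw [hA, Finset.mem_filter]; exact ⟨Finset.mem_univ _, hi, hGi⟩
          · rw [SimpleGraph.mem_neighborFinset]; exact hΓ
        refine ⟨Function.update f it c, ?_, ?_, ?_⟩
        · intro i j hi hj hij
          rcases Nat.lt_or_ge i.val t with hi' | hi' <;> rcases Nat.lt_or_ge j.val t with hj' | hj'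
          · rw [Function.update_of_ne (by simp [hit, Fin.ext_iff]; omega),
              Function.update_of_ne (by simp [hit, Fin.ext_iff]; omega)] at hij
            exact hinj i j hi' hj' hij
          · have hj'' : j = it := by simp [hit, Fin.ext_iff]; omega
            rw [hj'', Function.update_self,
              Function.update_of_ne (by simp [hit, Fin.ext_iff]; omega)] at hij
            exact absurd hij (hcnot i hi')
          · have hi'' : i = it := by simp [hit, Fin.ext_iff]; omega
            rw [hi'', Function.update_self,
              Function.update_of_ne (by simp [hit, Fin.ext_iff]; omega)] at hij
            exact absurd hij.symm (hcnot j hj')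
          · have h1 : i = it := by simp [hit, Fin.ext_iff]; omega
            have h2 : j = it := by simp [hit, Fin.ext_iff]; omega
            rw [h1, h2]
        · intro i j hi hj hGij
          rcases Nat.lt_or_ge i.val t with hi' | hi' <;> rcases Nat.lt_or_ge j.val t with hj' | hj'
          · rw [Function.update_of_ne (by simp [hit, Fin.ext_iff]; omega),
              Function.update_of_ne (by simp [hit, Fin.ext_iff]; omega)]
            exact hadj i j hi' hj' hGij
          · have hj'' : j = it := by simp [hit, Fin.ext_iff]; omega
            rw [hj''] at hGij ⊢
            rw [Function.update_self,
              Function.update_of_ne (by simp [hit, Fin.ext_iff]; omega)]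
            rw [SimpleGraph.compl_adj]
            exact ⟨hcnot i hi', hcadj i hi' hGij⟩
          · have hi'' : i = it := by simp [hit, Fin.ext_iff]; omega
            rw [hi''] at hGij ⊢
            rw [Function.update_self,
              Function.update_of_ne (by simp [hit, Fin.ext_iff]; omega)]
            have := hcadj j hj' hGij.symm
            rw [SimpleGraph.compl_adj]
            exact ⟨fun hcc => hcnot j hj' hcc.symm, fun hΓ => this hΓ.symm⟩
          · have h1 : i = it := by simp [hit, Fin.ext_iff]; omega
            have h2 : j = it := by simp [hit, Fin.ext_iff]; omega
            rw [h1, h2] at hGij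
            exact absurd hGij (G.irrefl)
        · intro i hi hik
          have hi' : i.val < t := by omega
          rw [Function.update_of_ne (by simp [hit, Fin.ext_iff]; omega)]
          exact hmem i hi' hik
  -- conclude
  obtain ⟨f, hinj, hadj, -⟩ := key N le_rfl
  refine ⟨⟨fun v => f (e.symm v), ?_⟩, ?_⟩
  · intro u v huv
    have := hadj (e.symm u) (e.symm v) (e.symm u).isLt (e.symm v).isLt
      (by simpa using huv)
    exact this
  · intro u v h
    have := hinj (e.symm u) (e.symm v) (e.symm u).isLt (e.symm v).isLt h
    exact e.symm.injective this
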